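/- Let A ∈ ℝ^{n×n}, B ∈ ℝ^{n×s}, 𝒱 ∈ ℝ^{n×q} with 𝒱ᵀ𝒱 = I_q, 𝒯 = 𝒱ᵀ A 𝒱 and B_m = 𝒱ᵀ B. Then for every s ≥ 0, ‖ 𝒱 e^{s𝒯} B_m ‖ ≤ e^{s·μ₂(A)} ‖B_m‖, where the middle step uses that multiplication by 𝒱 preserves the spectral norm and that ‖e^{s𝒯}‖ ≤ e^{s·μ₂(𝒯)} ≤ e^{s·μ₂(A)}. -/

import Mathlib

open Matrix Set
open scoped Matrix.Norms.L2Operator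

/-- The 2-logarithmic norm `μ₂(M) = (1/2)·λ_max(M + Mᵀ)` of a real square matrix: half the
largest eigenvalue of the symmetric matrix `M + Mᵀ`. -/
noncomputable def mu2 {k : ℕ} (M : Matrix (Fin k) (Fin k) ℝ) : ℝ :=
  (1 / 2) * ⨆ i, (show (M + Mᵀ).IsHermitian by
    simpa [Matrix.conjTranspose_eq_transpose_of_trivial] using
      Matrix.isHermitian_add_transpose_self M).eigenvalues i

open NormedSpace in
open scoped InnerProductSpace in
/-- Rayleigh-quotient upper bound for a real Hermitian (symmetric) matrix. -/
lemma aux_rayleigh_le {q : ℕ} (H : Matrix (Fin q) (Fin q) ℝ) (hH : H.IsHermitian)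
    (μ : ℝ) (hμ : ∀ i, hH.eigenvalues i ≤ μ) (x : EuclideanSpace ℝ (Fin q)) :
    ⟪x, Matrix.toEuclideanLin H x⟫_ℝ ≤ μ * ‖x‖ ^ 2 := by
  classical
  set b := hH.eigenvectorBasis with hb
  have hsym : (Matrix.toEuclideanLin H).IsSymmetric :=
    (Matrix.isHermitian_iff_isSymmetric).1 hH
  have hev : ∀ i, Matrix.toEuclideanLin H (b i) = hH.eigenvalues i • b i := by
    intro i
    have h2 := congrArg (WithLp.equiv 2 (Fin q → ℝ)).symm (hH.mulVec_eigenvectorBasis i)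
    simpa [toEuclideanLin_apply] using h2
  have key : ⟪x, Matrix.toEuclideanLin H x⟫_ℝ
      = ∑ i, hH.eigenvalues i * (⟪x, b i⟫_ℝ * ⟪b i, x⟫_ℝ) := by
    rw [← b.sum_inner_mul_inner x (Matrix.toEuclideanLin H x)]
    congr 1; funext i
    rw [← hsym (b i) x, hev i, inner_smul_left]
    simp only [starRingEnd_apply, star_trivial]
    ring
  have key2 : ⟪x, x⟫_ℝ = ∑ i, ⟪x, b i⟫_ℝ * ⟪b i, x⟫_ℝ :=
    (b.sum_inner_mul_inner x x).symm
  have hnn : ∀ i, 0 ≤ ⟪x, b i⟫_ℝ * ⟪b i, x⟫_ℝ := by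
    intro i; rw [real_inner_comm x (b i)]; exact mul_self_nonneg _
  calc ⟪x, Matrix.toEuclideanLin H x⟫_ℝ = _ := key
    _ ≤ ∑ i, μ * (⟪x, b i⟫_ℝ * ⟪b i, x⟫_ℝ) :=
        Finset.sum_le_sum fun i _ => mul_le_mul_of_nonneg_right (hμ i) (hnn i)
    _ = μ * ⟪x, x⟫_ℝ := by rw [← Finset.mul_sum, key2]
    _ = μ * ‖x‖ ^ 2 := by rw [real_inner_self_eq_norm_sq]

open NormedSpace in
open scoped InnerProductSpace in
/-- Logarithmic-norm style bound for the matrix exponential, applied to a vector. -/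
lemma aux_exp_mulVec_norm_le {q : ℕ} (M : Matrix (Fin q) (Fin q) ℝ) (μ : ℝ)
    (hquad : ∀ v : EuclideanSpace ℝ (Fin q), ⟪v, Matrix.toEuclideanLin M v⟫_ℝ ≤ μ * ‖v‖ ^ 2)
    (c : ℝ) (hc : 0 ≤ c) (x : EuclideanSpace ℝ (Fin q)) :
    ‖Matrix.toEuclideanLin (NormedSpace.exp (c • M)) x‖ ≤ Real.exp (c * μ) * ‖x‖ := by
  classical
  set G : Matrix (Fin q) (Fin q) ℝ →ₗ[ℝ] EuclideanSpace ℝ (Fin q) :=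
    (LinearMap.applyₗ x).comp (Matrix.toEuclideanLin (𝕜 := ℝ)).toLinearMap with hG
  set Gc : Matrix (Fin q) (Fin q) ℝ →L[ℝ] EuclideanSpace ℝ (Fin q) :=
    LinearMap.toContinuousLinearMap G with hGc
  set y : ℝ → EuclideanSpace ℝ (Fin q) := fun t => Gc (exp (t • M)) with hy
  have hyval : ∀ t, y t = Matrix.toEuclideanLin (exp (t • M)) x := fun t => rfl
  have hyderiv : ∀ t, HasDerivAt y (Matrix.toEuclideanLin M (y t)) t := by
    intro t
    have h1 := hasDerivAt_exp_smul_const' (𝕂 := ℝ) M t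
    have h2 := Gc.hasFDerivAt.comp_hasDerivAt t h1
    have h3 : Gc (M * exp (t • M)) = Matrix.toEuclideanLin M (y t) := by
      rw [hyval]
      show Matrix.toEuclideanLin (M * exp (t • M)) x = _
      simp [Matrix.toEuclideanLin_apply, Matrix.mulVec_mulVec]
    rw [h3] at h2
    exact h2
  set φ : ℝ → ℝ := fun t => ⟪y t, y t⟫_ℝ with hφ
  have hφderiv : ∀ t, HasDerivAt φ
      (⟪y t, Matrix.toEuclideanLin M (y t)⟫_ℝ + ⟪Matrix.toEuclideanLin M (y t), y t⟫_ℝ) t :=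
    fun t => (hyderiv t).inner ℝ (hyderiv t)
  set g : ℝ → ℝ := fun t => Real.exp (-(2 * μ) * t) * φ t with hg
  have hgderiv : ∀ t, HasDerivAt g
      (Real.exp (-(2 * μ) * t) * -(2 * μ) *  φ t
        + Real.exp (-(2 * μ) * t) *
          (⟪y t, Matrix.toEuclideanLin M (y t)⟫_ℝ + ⟪Matrix.toEuclideanLin M (y t), y t⟫_ℝ)) t := by
    intro t
    have h := (((hasDerivAt_id t).const_mul (-(2 * μ))).exp).mul (hφderiv t)
    simp only [id_eq] at h
    exact h.congr_deriv (by ring)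
  have hgderiv_nonpos : ∀ t, deriv g t ≤ 0 := by
    intro t
    rw [(hgderiv t).deriv]
    have h1 : ⟪y t, Matrix.toEuclideanLin M (y t)⟫_ℝ ≤ μ * φ t := by
      have := hquad (y t)
      rwa [← real_inner_self_eq_norm_sq] at this
    have h2 : ⟪Matrix.toEuclideanLin M (y t), y t⟫_ℝ ≤ μ * φ t := by
      rw [real_inner_comm]; exact h1
    have hexp : (0 : ℝ) < Real.exp (-(2 * μ) * t) := Real.exp_pos _
    nlinarith [hexp.le]
  have hanti : AntitoneOn g (Set.Icc 0 c) := by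
    apply antitoneOn_of_deriv_nonpos (convex_Icc 0 c)
    · exact (fun t _ => ((hgderiv t).differentiableAt).continuousAt.continuousWithinAt)
    · exact fun t _ => ((hgderiv t).differentiableAt).differentiableWithinAt
    · exact fun t _ => hgderiv_nonpos t
  have h0 : g c ≤ g 0 := hanti (Set.left_mem_Icc.2 hc) (Set.right_mem_Icc.2 hc) hc
  have hy0 : y 0 = x := by
    rw [hyval]; simp [Matrix.toEuclideanLin_apply]
  have hg0 : g 0 = ‖x‖ ^ 2 := by
    simp only [hg, hφ, hy0]
    rw [real_inner_self_eq_norm_sq]; simp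
  have hφc : φ c = ‖y c‖ ^ 2 := real_inner_self_eq_norm_sq _
  have key : ‖y c‖ ^ 2 ≤ (Real.exp (c * μ) * ‖x‖) ^ 2 := by
    have hgc : g c = Real.exp (-(2 * μ) * c) * ‖y c‖ ^ 2 := by rw [hg]; simp [hφc]
    rw [hgc, hg0] at h0
    have h3 : ‖y c‖ ^ 2 ≤ Real.exp (2 * μ * c) * ‖x‖ ^ 2 := by
      have hmul := mul_le_mul_of_nonneg_left h0 (Real.exp_pos (2 * μ * c)).le
      rw [← mul_assoc, ← Real.exp_add] at hmul
      have hz : (2 * μ * c) + (-(2 * μ) * c) = 0 := by ring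
      rwa [hz, Real.exp_zero, one_mul] at hmul
    have h4 : (Real.exp (c * μ) * ‖x‖) ^ 2 = Real.exp (2 * μ * c) * ‖x‖ ^ 2 := by
      rw [mul_pow, pow_two, ← Real.exp_add]
      congr 2
      ring
    rw [h4]
    exact h3
  have := Real.sqrt_le_sqrt key
  rwa [Real.sqrt_sq (norm_nonneg _), Real.sqrt_sq (by positivity)] at this

lemma piLp_equiv_toEuclideanLin_apply {m k : ℕ} (M : Matrix (Fin m) (Fin k) ℝ)
    (v : EuclideanSpace ℝ (Fin k)) :
    WithLp.equiv 2 (Fin m → ℝ) (Matrix.toEuclideanLin M v) = M *ᵥ WithLp.equiv 2 (Fin k → ℝ) v :=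
  rfl

open scoped InnerProductSpace in
lemma aux_inner_eq_dot {k : ℕ} (a b : EuclideanSpace ℝ (Fin k)) :
    ⟪a, b⟫_ℝ = (WithLp.equiv 2 (Fin k → ℝ) a) ⬝ᵥ (WithLp.equiv 2 (Fin k → ℝ) b) := by
  simp [PiLp.inner_apply, dotProduct, mul_comm]

open scoped InnerProductSpace in
lemma aux_isometry {n q : ℕ} (V : Matrix (Fin n) (Fin q) ℝ) (hV : Vᵀ * V = 1)
    (u : EuclideanSpace ℝ (Fin q)) :
    ‖Matrix.toEuclideanLin V u‖ = ‖u‖ := by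
  have h : ⟪Matrix.toEuclideanLin V u, Matrix.toEuclideanLin V u⟫_ℝ = ⟪u, u⟫_ℝ := by
    rw [aux_inner_eq_dot, aux_inner_eq_dot]
    simp only [piLp_equiv_toEuclideanLin_apply]
    set u' := WithLp.equiv 2 (Fin q → ℝ) u
    calc (V *ᵥ u') ⬝ᵥ (V *ᵥ u') = (u' ᵥ* Vᵀ) ⬝ᵥ (V *ᵥ u') := by rw [Matrix.vecMul_transpose]
      _ = u' ⬝ᵥ (Vᵀ *ᵥ (V *ᵥ u')) := (Matrix.dotProduct_mulVec _ _ _).symm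
      _ = u' ⬝ᵥ ((Vᵀ * V) *ᵥ u') := by rw [Matrix.mulVec_mulVec]
      _ = u' ⬝ᵥ u' := by rw [hV, Matrix.one_mulVec]
  have h2 : ‖Matrix.toEuclideanLin V u‖ ^ 2 = ‖u‖ ^ 2 := by
    rw [← real_inner_self_eq_norm_sq, ← real_inner_self_eq_norm_sq]; exact h
  have := congrArg Real.sqrt h2
  rwa [Real.sqrt_sq (norm_nonneg _), Real.sqrt_sq (norm_nonneg _)] at this

/-- If `𝒱ᵀ𝒱 = I_q`, `𝒯 = 𝒱ᵀ A 𝒱`, `B_m = 𝒱ᵀ B`, then for every `c ≥ 0`,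
`‖𝒱 e^{c𝒯} B_m‖ ≤ e^{c μ₂(A)} ‖B_m‖` in the spectral norm. -/
theorem projected_exp_norm_bound
    (n s q : ℕ) (hn : 0 < n) (hs : 0 < s) (hq : 0 < q)
    (A : Matrix (Fin n) (Fin n) ℝ) (B : Matrix (Fin n) (Fin s) ℝ)
    (V : Matrix (Fin n) (Fin q) ℝ) (hV : Vᵀ * V = 1)
    (T : Matrix (Fin q) (Fin q) ℝ) (hT : T = Vᵀ * A * V)
    (Bm : Matrix (Fin q) (Fin s) ℝ) (hBm : Bm = Vᵀ * B) :
    ∀ c : ℝ, 0 ≤ c →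
      ‖V * NormedSpace.exp (c • T) * Bm‖ ≤ Real.exp (c * mu2 A) * ‖Bm‖ := by
  classical
  open scoped InnerProductSpace in
  intro c hc
  haveI : Nonempty (Fin n) := Fin.pos_iff_nonempty.mp hn
  set H : Matrix (Fin n) (Fin n) ℝ := A + Aᵀ with hHdef
  have hH : H.IsHermitian := by
    simpa [Matrix.conjTranspose_eq_transpose_of_trivial] using
      Matrix.isHermitian_add_transpose_self A
  -- each eigenvalue of A + Aᵀ is at most 2 * mu2 A
  have hμeig : ∀ i, hH.eigenvalues i ≤ 2 * mu2 A := by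
    intro i
    have hbdd : BddAbove (Set.range hH.eigenvalues) := (Set.finite_range _).bddAbove
    have hle := le_ciSup hbdd i
    have : 2 * mu2 A = ⨆ i, hH.eigenvalues i := by
      rw [mu2]
      ring
    rw [this]
    exact hle
  -- quadratic form bound for A
  have hAquad : ∀ w : EuclideanSpace ℝ (Fin n),
      ⟪w, Matrix.toEuclideanLin A w⟫_ℝ ≤ mu2 A * ‖w‖ ^ 2 := by
    intro w
    have hsymAT : ⟪w, Matrix.toEuclideanLin Aᵀ w⟫_ℝ = ⟪w, Matrix.toEuclideanLin A w⟫_ℝ := by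
      rw [aux_inner_eq_dot, aux_inner_eq_dot]
      simp only [piLp_equiv_toEuclideanLin_apply]
      set w' := WithLp.equiv 2 (Fin n → ℝ) w
      calc w' ⬝ᵥ (Aᵀ *ᵥ w') = w' ⬝ᵥ (w' ᵥ* A) := by rw [Matrix.mulVec_transpose]
        _ = (w' ᵥ* A) ⬝ᵥ w' := dotProduct_comm _ _
        _ = w' ⬝ᵥ (A *ᵥ w') := (Matrix.dotProduct_mulVec _ _ _).symm
    have hray := aux_rayleigh_le H hH (2 * mu2 A) hμeig w
    have hsplit : Matrix.toEuclideanLin H w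
        = Matrix.toEuclideanLin A w + Matrix.toEuclideanLin Aᵀ w := by
      rw [hHdef, map_add]; rfl
    rw [hsplit, inner_add_right, hsymAT] at hray
    nlinarith [hray]
  -- quadratic form bound for T
  have hTquad : ∀ v : EuclideanSpace ℝ (Fin q),
      ⟪v, Matrix.toEuclideanLin T v⟫_ℝ ≤ mu2 A * ‖v‖ ^ 2 := by
    intro v
    set w : EuclideanSpace ℝ (Fin n) :=
      (WithLp.equiv 2 (Fin n → ℝ)).symm (V *ᵥ (WithLp.equiv 2 (Fin q → ℝ) v)) with hw
    have hwnorm : ‖w‖ = ‖v‖ := by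
      have : w = Matrix.toEuclideanLin V v := by
        rw [hw, Matrix.toEuclideanLin_apply]; rfl
      rw [this]
      exact aux_isometry V hV v
    have hquadeq : ⟪v, Matrix.toEuclideanLin T v⟫_ℝ = ⟪w, Matrix.toEuclideanLin A w⟫_ℝ := by
      rw [aux_inner_eq_dot, aux_inner_eq_dot]
      simp only [piLp_equiv_toEuclideanLin_apply, hw]
      set v' := WithLp.equiv 2 (Fin q → ℝ) v
      have hVv : WithLp.equiv 2 (Fin n → ℝ) ((WithLp.equiv 2 (Fin n → ℝ)).symm (V *ᵥ v'))
          = V *ᵥ v' := (WithLp.equiv 2 (Fin n → ℝ)).apply_symm_apply _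
      rw [hVv, hT]
      calc v' ⬝ᵥ ((Vᵀ * A * V) *ᵥ v') = v' ⬝ᵥ (Vᵀ *ᵥ ((A * V) *ᵥ v')) := by
            rw [Matrix.mulVec_mulVec, Matrix.mul_assoc]
        _ = (v' ᵥ* Vᵀ) ⬝ᵥ ((A * V) *ᵥ v') := Matrix.dotProduct_mulVec _ _ _
        _ = (V *ᵥ v') ⬝ᵥ (A *ᵥ (V *ᵥ v')) := by
            rw [Matrix.vecMul_transpose, Matrix.mulVec_mulVec]
    rw [hquadeq, ← hwnorm]
    exact hAquad w
  -- now the operator norm bound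
  rw [Matrix.l2_opNorm_def]
  apply ContinuousLinearMap.opNorm_le_bound _ (by positivity)
  intro x
  simp only [LinearEquiv.trans_apply, LinearMap.coe_toContinuousLinearMap']
  have happ : Matrix.toEuclideanLin (V * NormedSpace.exp (c • T) * Bm) x
      = Matrix.toEuclideanLin V
          (Matrix.toEuclideanLin (NormedSpace.exp (c • T)) (Matrix.toEuclideanLin Bm x)) := by
    simp [Matrix.toEuclideanLin_apply, Matrix.mulVec_mulVec, Matrix.mul_assoc]
  rw [happ, aux_isometry V hV]
  calc ‖Matrix.toEuclideanLin (NormedSpace.exp (c • T)) (Matrix.toEuclideanLin Bm x)‖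
      ≤ Real.exp (c * mu2 A) * ‖Matrix.toEuclideanLin Bm x‖ :=
        aux_exp_mulVec_norm_le T (mu2 A) hTquad c hc _
    _ ≤ Real.exp (c * mu2 A) * (‖Bm‖ * ‖x‖) := by
        apply mul_le_mul_of_nonneg_left _ (Real.exp_pos _).le
        exact Matrix.l2_opNorm_mulVec Bm x
    _ = Real.exp (c * mu2 A) * ‖Bm‖ * ‖x‖ := by ring
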